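/- Let a, b, α, β ∈ ℂ with b ≠ 0. Suppose h_{i,m} ∈ ℂ[∂,λ] satisfy: (i) h_{0,m} ∈ ℂ[λ] (independent of ∂), (ii) ((a/2)λ - μ + b/2)·h_{0,m}(λ+μ) = -μ·h_{0,m}(μ) in ℂ[λ,μ] for all m, and (iii) h_{0,m}(∂+λ,μ)·(∂+αλ+β) - (∂+μ+αλ+β)·h_{0,i+m}(∂,μ) = ((a/2)λ-μ+b/2)·h_{i,m}(∂,λ+μ) for all i, m (the j = 0 case of the L-Y compatibility). Then h_{i,m} = 0 for all i, m ∈ ℤ. -/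
import Mathlib


/-- Case 1 (b ≠ 0) of Lemma 5.2: given (i) h_{0,m} independent of ∂, (ii)
((a/2)λ - μ + b/2)h_{0,m}(λ+μ) = -μ h_{0,m}(μ), and (iii) the j = 0 case of the L-Y
compatibility, all h_{i,m} = 0. -/
theorem stmt19 (a b α β : ℂ) (hb : b ≠ 0) (h : ℤ → ℤ → MvPolynomial (Fin 2) ℂ)
    (h0indep : ∀ (m : ℤ) (x x' y : ℂ),
      MvPolynomial.eval ![x, y] (h 0 m) = MvPolynomial.eval ![x', y] (h 0 m))
    (hii : ∀ (m : ℤ) (x l μ : ℂ),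
      ((a/2)*l - μ + b/2) * MvPolynomial.eval ![x, l + μ] (h 0 m)
        = -μ * MvPolynomial.eval ![x, μ] (h 0 m))
    (hiii : ∀ (i m : ℤ) (x l μ : ℂ),
      MvPolynomial.eval ![x + l, μ] (h 0 m) * (x + α*l + β)
        - (x + μ + α*l + β) * MvPolynomial.eval ![x, μ] (h 0 (i + m))
        = ((a/2)*l - μ + b/2) * MvPolynomial.eval ![x, l + μ] (h i m)) :
    ∀ (i m : ℤ), h i m = 0 := by
  -- Step 1: h_{0,m} evaluates to 0 everywhere.
  have h0zero : ∀ (m : ℤ) (x μ : ℂ), MvPolynomial.eval ![x, μ] (h 0 m) = 0 := by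
    intro m x μ
    have := hii m x 0 μ
    simp only [mul_zero, zero_add] at this
    have hb2 : (b/2) * MvPolynomial.eval ![x, μ] (h 0 m) = 0 := by ring_nf; ring_nf at this; linear_combination this
    have : b/2 ≠ 0 := by
      simpa using div_ne_zero hb (by norm_num : (2:ℂ) ≠ 0)
    exact (mul_eq_zero.mp hb2).resolve_left ‹b/2 ≠ 0›
  intro i m
  -- Step 2: (b/2 - μ) * eval (h i m) = 0 for all points.
  have key : ∀ (x μ : ℂ), (b/2 - μ) * MvPolynomial.eval ![x, μ] (h i m) = 0 := by
    intro x μ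
    have := hiii i m x 0 μ
    rw [h0zero, h0zero] at this
    simp only [mul_zero, zero_mul, zero_add, sub_zero, zero_sub, neg_eq_zero] at this
    linear_combination -this
  -- Step 3: the polynomial (C (b/2) - X 1) * h i m is zero.
  have hpoly : (MvPolynomial.C (b/2) - MvPolynomial.X 1) * h i m = 0 := by
    apply MvPolynomial.funext
    intro v
    have hv : ![v 0, v 1] = v := by
      funext j; fin_cases j <;> rfl
    have := key (v 0) (v 1)
    rw [hv] at this
    simp [this]
  have hne : (MvPolynomial.C (b/2) - MvPolynomial.X 1 : MvPolynomial (Fin 2) ℂ) ≠ 0 := by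
    intro hc
    have := congrArg (MvPolynomial.eval ![(0:ℂ), b/2 + 1]) hc
    simp at this
  exact (mul_eq_zero.mp hpoly).resolve_left hne
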